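/- arXiv:1410.8314 — 5 statements merged into one kernel-verified Lean document; each statement's English description precedes it below -/
import Mathlib

section
/- If R₁ ⊆ X × Y and R₂ ⊆ Y × Z are relations, μ_X ∈ Disc(X), μ_Y ∈ Disc(Y), μ_Z ∈ Disc(Z) are distributions with μ_X related to μ_Y under the lifting of R₁ and μ_Y related to μ_Z under the lifting of R₂, then μ_X is related to μ_Z under the lifting of the composition R₁ ∘ R₂ (where x (R₁∘R₂) z iff there exists y with x R₁ y and y R₂ z). -/
open Finset

/-- A (finitely supported, here: on a finite type) probability distribution. -/
def IsDist {X : Type*} [Fintype X] (μ : X → ℝ) : Prop :=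
  (∀ x, 0 ≤ μ x) ∧ ∑ x, μ x = 1

/-- The lifting of a relation `R ⊆ X × Y` to distributions, via a weighting function. -/
def IsLifting {X Y : Type*} [Fintype X] [Fintype Y]
    (R : X → Y → Prop) (μ : X → ℝ) (ν : Y → ℝ) : Prop :=
  ∃ w : X → Y → ℝ,
    (∀ x y, 0 ≤ w x y ∧ w x y ≤ 1) ∧
    (∀ x y, 0 < w x y → R x y) ∧
    (∀ x, ∑ y, w x y = μ x) ∧
    (∀ y, ∑ x, w x y = ν y)

/-- Liftings compose along relational composition. -/
theorem lifting_comp {X Y Z : Type*} [Fintype X] [Fintype Y] [Fintype Z]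
    (R₁ : X → Y → Prop) (R₂ : Y → Z → Prop)
    (μX : X → ℝ) (μY : Y → ℝ) (μZ : Z → ℝ)
    (hX : IsDist μX) (hY : IsDist μY) (hZ : IsDist μZ)
    (h₁ : IsLifting R₁ μX μY) (h₂ : IsLifting R₂ μY μZ) :
    IsLifting (fun x z => ∃ y, R₁ x y ∧ R₂ y z) μX μZ := by
  obtain ⟨w₁, hw₁b, hw₁R, hw₁r, hw₁c⟩ := h₁
  obtain ⟨w₂, hw₂b, hw₂R, hw₂r, hw₂c⟩ := h₂
  have hμYpos : ∀ y, 0 ≤ μY y := hY.1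
  have hw1zero : ∀ x y, μY y = 0 → w₁ x y = 0 := by
    intro x y hy
    have hsum : ∑ x', w₁ x' y = 0 := (hw₁c y).trans hy
    exact (Finset.sum_eq_zero_iff_of_nonneg (fun x' _ => (hw₁b x' y).1)).1 hsum x
      (Finset.mem_univ x)
  have hw2zero : ∀ y z, μY y = 0 → w₂ y z = 0 := by
    intro y z hy
    have hsum : ∑ z', w₂ y z' = 0 := (hw₂r y).trans hy
    exact (Finset.sum_eq_zero_iff_of_nonneg (fun z' _ => (hw₂b y z').1)).1 hsum z
      (Finset.mem_univ z)
  have hw1le : ∀ x y, w₁ x y ≤ μY y := by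
    intro x y
    rw [← hw₁c y]
    exact Finset.single_le_sum (fun x' _ => (hw₁b x' y).1) (Finset.mem_univ x)
  set w : X → Z → ℝ := fun x z => ∑ y, if μY y = 0 then 0 else w₁ x y * w₂ y z / μY y
    with hw
  have hterm0 : ∀ x z y, 0 ≤ (if μY y = 0 then 0 else w₁ x y * w₂ y z / μY y) := by
    intro x z y
    split
    · exact le_refl 0
    · next h =>
      have hpos : 0 < μY y := lt_of_le_of_ne (hμYpos y) (Ne.symm h)
      have := (hw₁b x y).1
      have := (hw₂b y z).1
      positivity
  refine ⟨w, ?_, ?_, ?_, ?_⟩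
  · intro x z
    refine ⟨Finset.sum_nonneg fun y _ => hterm0 x z y, ?_⟩
    have hle : ∀ y, (if μY y = 0 then 0 else w₁ x y * w₂ y z / μY y) ≤ w₂ y z := by
      intro y
      split
      · exact (hw₂b y z).1
      · next h =>
        have hpos : 0 < μY y := lt_of_le_of_ne (hμYpos y) (Ne.symm h)
        rw [div_le_iff₀ hpos]
        calc w₁ x y * w₂ y z ≤ μY y * w₂ y z :=
              mul_le_mul_of_nonneg_right (hw1le x y) (hw₂b y z).1
          _ = w₂ y z * μY y := mul_comm _ _
    calc w x z ≤ ∑ y, w₂ y z := Finset.sum_le_sum fun y _ => hle y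
      _ = μZ z := hw₂c z
      _ ≤ ∑ z', μZ z' := Finset.single_le_sum (fun z' _ => hZ.1 z') (Finset.mem_univ z)
      _ = 1 := hZ.2
  · intro x z hpos
    have : ∃ y ∈ Finset.univ, (if μY y = 0 then 0 else w₁ x y * w₂ y z / μY y) ≠ 0 := by
      by_contra hc
      push_neg at hc
      have : w x z = 0 := Finset.sum_eq_zero fun y hy => hc y hy
      simp [this] at hpos
    obtain ⟨y, _, hy⟩ := this
    have hμ : μY y ≠ 0 := by intro h0; simp [h0] at hy
    rw [if_neg hμ] at hy
    have hμpos : 0 < μY y := lt_of_le_of_ne (hμYpos y) (Ne.symm hμ)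
    have hprod : w₁ x y * w₂ y z ≠ 0 := fun h0 => hy (by simp [h0])
    have h1 : w₁ x y ≠ 0 := fun h0 => hprod (by simp [h0])
    have h2 : w₂ y z ≠ 0 := fun h0 => hprod (by simp [h0])
    exact ⟨y, hw₁R x y (lt_of_le_of_ne (hw₁b x y).1 (Ne.symm h1)),
      hw₂R y z (lt_of_le_of_ne (hw₂b y z).1 (Ne.symm h2))⟩
  · intro x
    calc ∑ z, w x z = ∑ y, ∑ z, (if μY y = 0 then 0 else w₁ x y * w₂ y z / μY y) :=
          Finset.sum_comm
      _ = ∑ y, w₁ x y := by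
          refine Finset.sum_congr rfl fun y _ => ?_
          by_cases h : μY y = 0
          · simp [h, hw1zero x y h]
          · simp only [if_neg h]
            rw [show (fun z => w₁ x y * w₂ y z / μY y) = fun z => (w₁ x y / μY y) * w₂ y z
                from funext fun z => by ring, ← Finset.mul_sum, hw₂r y]
            field_simp
      _ = μX x := hw₁r x
  · intro z
    calc ∑ x, w x z = ∑ y, ∑ x, (if μY y = 0 then 0 else w₁ x y * w₂ y z / μY y) :=
          Finset.sum_comm
      _ = ∑ y, w₂ y z := by
          refine Finset.sum_congr rfl fun y _ => ?_
          by_cases h : μY y = 0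
          · simp [h, hw2zero y z h]
          · simp only [if_neg h]
            rw [show (fun x => w₁ x y * w₂ y z / μY y) = fun x => (w₂ y z / μY y) * w₁ x y
                from funext fun x => by ring, ← Finset.mul_sum, hw₁c y]
            field_simp
      _ = μZ z := hw₂c z
end

section
/- If R ⊆ X × X is a transitive relation, then its lifting to probability distributions is transitive. -/
open Finset

/-- The lifting of a transitive relation is transitive. -/
theorem lifting_transitive {X : Type*} [Fintype X]
    (R : X → X → Prop) (hR : Transitive R)
    (μ ν ξ : X → ℝ) (hμ : IsDist μ) (hν : IsDist ν) (hξ : IsDist ξ)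
    (h₁ : IsLifting R μ ν) (h₂ : IsLifting R ν ξ) :
    IsLifting R μ ξ := by
  obtain ⟨w₁, hw₁01, hw₁R, hw₁row, hw₁col⟩ := h₁
  obtain ⟨w₂, hw₂01, hw₂R, hw₂row, hw₂col⟩ := h₂
  have hz₁ : ∀ x y, ν y = 0 → w₁ x y = 0 := by
    intro x y h
    have hs : ∑ x, w₁ x y = 0 := (hw₁col y).trans h
    exact (Finset.sum_eq_zero_iff_of_nonneg (fun i _ => (hw₁01 i y).1)).mp hs x (mem_univ x)
  have hz₂ : ∀ y z, ν y = 0 → w₂ y z = 0 := by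
    intro y z h
    have hs : ∑ z, w₂ y z = 0 := (hw₂row y).trans h
    exact (Finset.sum_eq_zero_iff_of_nonneg (fun i _ => (hw₂01 y i).1)).mp hs z (mem_univ z)
  set t : X → X → X → ℝ := fun x z y => if ν y = 0 then 0 else w₁ x y * w₂ y z / ν y with ht
  have hterm_nonneg : ∀ x z y, 0 ≤ t x z y := by
    intro x z y
    simp only [ht]
    split
    · exact le_refl 0
    · exact div_nonneg (mul_nonneg (hw₁01 x y).1 (hw₂01 y z).1) (hν.1 y)
  set w : X → X → ℝ := fun x z => ∑ y, t x z y with hw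
  have hwnn : ∀ x z, 0 ≤ w x z := fun x z =>
    Finset.sum_nonneg fun y _ => hterm_nonneg x z y
  -- row sums
  have hrow : ∀ x, ∑ z, w x z = μ x := by
    intro x
    rw [show ∑ z, w x z = ∑ z, ∑ y, t x z y from rfl, Finset.sum_comm]
    rw [← hw₁row x]
    refine Finset.sum_congr rfl fun y _ => ?_
    by_cases h : ν y = 0
    · simp [ht, h, hz₁ x y h]
    · simp only [ht, if_neg h]
      rw [← Finset.sum_div, ← Finset.mul_sum, hw₂row y]
      field_simp
  -- column sums
  have hcol : ∀ z, ∑ x, w x z = ξ z := by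
    intro z
    rw [show ∑ x, w x z = ∑ x, ∑ y, t x z y from rfl, Finset.sum_comm]
    rw [← hw₂col z]
    refine Finset.sum_congr rfl fun y _ => ?_
    by_cases h : ν y = 0
    · simp [ht, h, hz₂ y z h]
    · simp only [ht, if_neg h]
      rw [← Finset.sum_div, ← Finset.sum_mul, hw₁col y]
      field_simp
  -- bound and relation
  refine ⟨w, fun x z => ⟨hwnn x z, ?_⟩, ?_, hrow, hcol⟩
  · calc w x z ≤ ∑ z', w x z' :=
        Finset.single_le_sum (fun z' _ => hwnn x z') (mem_univ z)
      _ = μ x := hrow x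
      _ ≤ ∑ x', μ x' := Finset.single_le_sum (fun x' _ => hμ.1 x') (mem_univ x)
      _ = 1 := hμ.2
  · intro x z hpos
    have hpos' : ∑ y : X, (0:ℝ) < ∑ y, t x z y := by simpa using hpos
    obtain ⟨y, -, hy⟩ := Finset.exists_lt_of_sum_lt hpos'
    simp only [ht] at hy
    by_cases h : ν y = 0
    · simp [h] at hy
    · rw [if_neg h] at hy
      have h1 : 0 < w₁ x y := by
        by_contra hc
        push_neg at hc
        have : w₁ x y = 0 := le_antisymm hc (hw₁01 x y).1
        simp [this] at hy
      have h2 : 0 < w₂ y z := by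
        by_contra hc
        push_neg at hc
        have : w₂ y z = 0 := le_antisymm hc (hw₂01 y z).1
        simp [this] at hy
      exact hR (hw₁R x y h1) (hw₂R y z h2)
end

section
/- Let I be a finite index set, (p_i)_{i∈I} positive reals summing to 1, and for each i ∈ I let μ_{x,i} ∈ Disc(X) and μ_{y,i} ∈ Disc(Y) be distributions such that μ_{x,i} is related to μ_{y,i} under the lifting of a relation R ⊆ X × Y. Then the convex combinations ∑_i p_i · μ_{x,i} and ∑_i p_i · μ_{y,i} are related under the lifting of R. -/
open Finset

/-- Liftings are preserved by convex combinations. -/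
theorem lifting_convex {X Y I : Type*} [Fintype X] [Fintype Y] [Fintype I]
    (R : X → Y → Prop)
    (p : I → ℝ) (hp : ∀ i, 0 < p i) (hp1 : ∑ i, p i = 1)
    (μx : I → X → ℝ) (μy : I → Y → ℝ)
    (hdx : ∀ i, IsDist (μx i)) (hdy : ∀ i, IsDist (μy i))
    (h : ∀ i, IsLifting R (μx i) (μy i)) :
    IsLifting R (fun x => ∑ i, p i * μx i x) (fun y => ∑ i, p i * μy i y) := by
  choose w hw01 hwR hwx hwy using h
  refine ⟨fun x y => ∑ i, p i * w i x y, ?_, ?_, ?_, ?_⟩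
  · intro x y
    constructor
    · exact Finset.sum_nonneg fun i _ => mul_nonneg (hp i).le (hw01 i x y).1
    · calc ∑ i, p i * w i x y ≤ ∑ i, p i * 1 :=
            Finset.sum_le_sum fun i _ => mul_le_mul_of_nonneg_left (hw01 i x y).2 (hp i).le
        _ = 1 := by simp [hp1]
  · intro x y hpos
    simp only at hpos
    by_contra hR
    have hz : ∀ i, w i x y = 0 := fun i =>
      le_antisymm (not_lt.1 fun hlt => hR (hwR i x y hlt)) (hw01 i x y).1
    simp [hz] at hpos
  · intro x
    rw [Finset.sum_comm]
    exact Finset.sum_congr rfl fun i _ => by rw [← Finset.mul_sum, hwx]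
  · intro y
    rw [Finset.sum_comm]
    exact Finset.sum_congr rfl fun i _ => by rw [← Finset.mul_sum, hwy]
end

section
/- If μ and ν are finitely supported probability distributions on X and μ is related to ν under the lifting of an equivalence relation R, then for every equivalence class C of R, μ(C) = ν(C), i.e., ∑_{x∈C} μ(x) = ∑_{x∈C} ν(x). -/
open Finset

/-- If μ and ν are related under the lifting of an equivalence relation R, then they
assign the same probability to each equivalence class. -/
theorem lifting_class_measure {X : Type*} [Fintype X]
    (R : X → X → Prop) [DecidableRel R] (hR : Equivalence R)
    (μ ν : X → ℝ) (hμ : IsDist μ) (hν : IsDist ν)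
    (h : IsLifting R μ ν) :
    ∀ x : X, ∑ z ∈ Finset.univ.filter (fun z => R x z), μ z
           = ∑ z ∈ Finset.univ.filter (fun z => R x z), ν z := by
  obtain ⟨w, hw01, hwR, hrow, hcol⟩ := h
  intro x
  set C := Finset.univ.filter (fun z => R x z) with hC
  have hzero : ∀ a b : X, a ∈ C → b ∉ C → w a b = 0 := by
    intro a b ha hb
    by_contra hne
    have hpos : 0 < w a b := lt_of_le_of_ne (hw01 a b).1 (Ne.symm hne)
    have := hwR a b hpos
    simp only [hC, mem_filter, mem_univ, true_and] at ha hb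
    exact hb (hR.trans ha this)
  have hzero' : ∀ a b : X, a ∉ C → b ∈ C → w a b = 0 := by
    intro a b ha hb
    by_contra hne
    have hpos : 0 < w a b := lt_of_le_of_ne (hw01 a b).1 (Ne.symm hne)
    have := hwR a b hpos
    simp only [hC, mem_filter, mem_univ, true_and] at ha hb
    exact ha (hR.trans hb (hR.symm this))
  calc ∑ z ∈ C, μ z = ∑ z ∈ C, ∑ y, w z y := by
        refine Finset.sum_congr rfl fun z hz => (hrow z).symm
    _ = ∑ z ∈ C, ∑ y ∈ C, w z y := by
        refine Finset.sum_congr rfl fun z hz => ?_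
        rw [← Finset.sum_subset (Finset.subset_univ C)]
        intro y _ hy; exact hzero z y hz hy
    _ = ∑ y ∈ C, ∑ z ∈ C, w z y := Finset.sum_comm
    _ = ∑ y ∈ C, ∑ z, w z y := by
        refine Finset.sum_congr rfl fun y hy => ?_
        rw [← Finset.sum_subset (Finset.subset_univ C)]
        intro z _ hz; exact hzero' z y hz hy
    _ = ∑ y ∈ C, ν y := Finset.sum_congr rfl fun y _ => hcol y
end

section
/- Conversely, if R is an equivalence relation on a finite type X and μ, ν ∈ Disc(X) satisfy μ(C) = ν(C) for every equivalence class C of R, then μ is related to ν under the lifting of R. -/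
open Finset

/-- Conversely, if μ and ν agree on every equivalence class of R, then μ is related
to ν under the lifting of R. -/
theorem lifting_of_class_measure {X : Type*} [Fintype X]
    (R : X → X → Prop) [DecidableRel R] (hR : Equivalence R)
    (μ ν : X → ℝ) (hμ : IsDist μ) (hν : IsDist ν)
    (h : ∀ x : X, ∑ z ∈ Finset.univ.filter (fun z => R x z), μ z
               = ∑ z ∈ Finset.univ.filter (fun z => R x z), ν z) :
    IsLifting R μ ν := by
  obtain ⟨hμ0, hμ1⟩ := hμ
  obtain ⟨hν0, hν1⟩ := hν
  set S : X → ℝ := fun x => ∑ z ∈ Finset.univ.filter (fun z => R x z), μ z with hS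
  have hSnn : ∀ x, 0 ≤ S x := fun x => Finset.sum_nonneg (fun z _ => hμ0 z)
  have hclass : ∀ x y, R x y →
      (Finset.univ.filter (fun z => R x z)) = (Finset.univ.filter (fun z => R y z)) := by
    intro x y hxy
    ext z
    simp only [mem_filter, mem_univ, true_and]
    exact ⟨fun hz => hR.trans (hR.symm hxy) hz, fun hz => hR.trans hxy hz⟩
  have hSeq : ∀ x y, R x y → S x = S y := fun x y hxy =>
    congrArg (fun s => ∑ z ∈ s, μ z) (hclass x y hxy)
  have hμleS : ∀ x, μ x ≤ S x := by
    intro x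
    apply Finset.single_le_sum (fun z _ => hμ0 z)
    simp [hR.refl x]
  have hν1' : ∀ y, ν y ≤ 1 := by
    intro y
    calc ν y ≤ ∑ z, ν z := Finset.single_le_sum (fun z _ => hν0 z) (mem_univ y)
      _ = 1 := hν1
  refine ⟨fun x y => if R x y then μ x * ν y / S x else 0, ?_, ?_, ?_, ?_⟩
  · intro x y
    by_cases hxy : R x y
    · simp only [hxy, if_true]
      refine ⟨div_nonneg (mul_nonneg (hμ0 x) (hν0 y)) (hSnn x), ?_⟩
      rcases eq_or_lt_of_le (hSnn x) with hs | hs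
      · rw [← hs]; simp
      · rw [div_le_one hs]
        calc μ x * ν y ≤ S x * 1 := mul_le_mul (hμleS x) (hν1' y) (hν0 y) (hSnn x)
          _ = S x := mul_one _
    · simp [hxy]
  · intro x y hpos
    by_contra hxy
    simp [hxy] at hpos
  · intro x
    rcases eq_or_lt_of_le (hSnn x) with hs | hs
    · have hx0 : μ x = 0 := le_antisymm (by rw [hs]; exact hμleS x) (hμ0 x)
      rw [hx0]
      apply Finset.sum_eq_zero
      intro y _
      by_cases hxy : R x y <;> simp [hxy, hx0]
    · simp only [← Finset.sum_filter]
      have h2 : ∑ y ∈ Finset.univ.filter (fun y => R x y), μ x * ν y / S x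
          = (μ x / S x) * ∑ y ∈ Finset.univ.filter (fun y => R x y), ν y := by
        rw [Finset.mul_sum]; apply Finset.sum_congr rfl; intro y _; ring
      rw [h2, ← h x]
      show (μ x / S x) * S x = μ x
      field_simp
  · intro y
    rcases eq_or_lt_of_le (hSnn y) with hs | hs
    · have hνS : ∑ z ∈ Finset.univ.filter (fun z => R y z), ν z = 0 := by
        rw [← h y]; exact hs.symm
      have hy0 : ν y = 0 := by
        have hle : ν y ≤ ∑ z ∈ Finset.univ.filter (fun z => R y z), ν z :=
          Finset.single_le_sum (fun z _ => hν0 z) (by simp [hR.refl y])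
        rw [hνS] at hle
        exact le_antisymm hle (hν0 y)
      rw [hy0]
      apply Finset.sum_eq_zero
      intro x _
      by_cases hxy : R x y
      · simp [hxy, hy0]
      · simp [hxy]
    · have step : ∀ x, (if R x y then μ x * ν y / S x else 0)
          = (if R x y then μ x else 0) * (ν y / S y) := by
        intro x
        by_cases hxy : R x y
        · rw [if_pos hxy, if_pos hxy, hSeq x y hxy]; ring
        · simp [hxy]
      simp only [step]
      rw [← Finset.sum_mul]; simp only [← Finset.sum_filter]
      have : ∑ x ∈ Finset.univ.filter (fun x => R x y), μ x = S y := by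
        rw [hS]
        apply Finset.sum_congr
        · ext z; simp only [mem_filter, mem_univ, true_and]
          exact ⟨hR.symm, hR.symm⟩
        · intros; rfl
      rw [this]
      field_simp
end
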